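/- Let H be a Hilbert space, u₁,…,u_m linearly independent, L(f) = (⟨u_i,f⟩), and V = span{u_i : i ∈ I} for some subset I ⊆ [1:m]. Then the minimum-norm interpolant f̂ (minimizer of ‖f‖ subject to L(f) = y) also minimizes ‖f − P_V f‖ subject to L(f) = y. -/

import Mathlib

open scoped RealInnerProductSpace

theorem stmt_12 {H : Type*} [NormedAddCommGroup H] [InnerProductSpace ℝ H]
    {m : ℕ} (u : Fin m → H) (hu : LinearIndependent ℝ u)
    (I : Set (Fin m)) (V : Submodule ℝ H) [CompleteSpace V]
    (hV : V = Submodule.span ℝ (u '' I))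
    (y : Fin m → ℝ) (fhat : H) (hdata : ∀ i, ⟪u i, fhat⟫ = y i)
    (hmin : ∀ f : H, (∀ i, ⟪u i, f⟫ = y i) → ‖fhat‖ ≤ ‖f‖) :
    ∀ f : H, (∀ i, ⟪u i, f⟫ = y i) →
      ‖fhat - (Submodule.orthogonalProjection V fhat : H)‖ ≤ ‖f - (Submodule.orthogonalProjection V f : H)‖ := by
  -- First: fhat is orthogonal to every g in ker L
  have horth : ∀ g : H, (∀ i, ⟪u i, g⟫ = 0) → ⟪fhat, g⟫ = 0 := by
    intro g hg
    by_contra hne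
    set c : ℝ := ⟪fhat, g⟫ with hc
    have hgne : g ≠ 0 := by
      intro h0; apply hne; simp [hc, h0]
    have hgsq : (0:ℝ) < ‖g‖ ^ 2 := by
      have := norm_pos_iff.mpr hgne
      positivity
    set t : ℝ := -c / ‖g‖ ^ 2 with ht
    have hdata' : ∀ i, ⟪u i, fhat + t • g⟫ = y i := by
      intro i
      rw [inner_add_right, inner_smul_right, hg i, hdata i]
      ring
    have hle := hmin _ hdata'
    have hexp : ‖fhat + t • g‖ ^ 2 = ‖fhat‖ ^ 2 + 2 * t * c + t ^ 2 * ‖g‖ ^ 2 := by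
      rw [norm_add_sq_real, inner_smul_right, norm_smul]
      simp only [← hc, mul_pow, sq_abs, Real.norm_eq_abs]
      ring
    have h1 : ‖fhat‖ ^ 2 ≤ ‖fhat + t • g‖ ^ 2 := by
      apply pow_le_pow_left₀ (norm_nonneg _) hle
    rw [hexp] at h1
    have : 2 * t * c + t ^ 2 * ‖g‖ ^ 2 = -(c ^ 2 / ‖g‖ ^ 2) := by
      rw [ht]; field_simp
      ring
    have hcsq : (0:ℝ) < c ^ 2 := by positivity
    have hpos : (0:ℝ) < c ^ 2 / ‖g‖ ^ 2 := by positivity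
    linarith
  intro f hf
  set g : H := f - fhat with hgdef
  have hg : ∀ i, ⟪u i, g⟫ = 0 := by
    intro i; rw [hgdef, inner_sub_right, hf i, hdata i, sub_self]
  -- g ∈ Vᗮ
  have hgV : g ∈ Vᗮ := by
    rw [hV, Submodule.mem_orthogonal]
    intro v hv
    induction hv using Submodule.span_induction with
    | mem x hx =>
      obtain ⟨i, _, rfl⟩ := hx
      exact hg i
    | zero => simp
    | add a b _ _ ha hb => rw [inner_add_left, ha, hb, add_zero]
    | smul r a _ ha => rw [inner_smul_left, ha, mul_zero]
  have hPg : Submodule.orthogonalProjection V g = 0 :=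
    Submodule.orthogonalProjectionOnto_apply_of_mem_orthogonal hgV
  have hPf : (Submodule.orthogonalProjection V f : H) = (Submodule.orthogonalProjection V fhat : H) := by
    have : f = fhat + g := by rw [hgdef]; abel
    rw [this, map_add, hPg]
    simp
  have hdecomp : f - (Submodule.orthogonalProjection V f : H)
      = (fhat - (Submodule.orthogonalProjection V fhat : H)) + g := by
    rw [hPf, hgdef]; abel
  have hinner : ⟪fhat - (Submodule.orthogonalProjection V fhat : H), g⟫ = 0 := by
    rw [inner_sub_left, horth g hg]
    have : ⟪((Submodule.orthogonalProjection V fhat : H)), g⟫ = 0 :=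
      hgV _ (Submodule.orthogonalProjection V fhat).2
    rw [this, sub_zero]
  have hsq : ‖f - (Submodule.orthogonalProjection V f : H)‖ ^ 2
      = ‖fhat - (Submodule.orthogonalProjection V fhat : H)‖ ^ 2 + ‖g‖ ^ 2 := by
    rw [hdecomp, norm_add_sq_real, hinner]; ring
  nlinarith [norm_nonneg (f - (Submodule.orthogonalProjection V f : H)),
    norm_nonneg (fhat - (Submodule.orthogonalProjection V fhat : H)), sq_nonneg ‖g‖]
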